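/- Fix reals X > 0, c > 0, P > 0, m ∈ ℝ, and let h_ext(t) := Σ_{l∈ℤ} (X/(√(2π)·c))·exp(−(t + l·P − m)²/(2c²)). Then for every integer n ≥ 1 and every real a > 0, the n-th Fourier coefficient h^(n) := (1/P)·∫₀^P h_ext(t)·exp(−2πi·n·t/P) dt satisfies |h^(n)| ≤ (X/P)·exp(a²/(2c²))·exp(−2π·n·a/P). -/

import Mathlib

open Real MeasureTheory Complex intervalIntegral ContinuousMap
open scoped Topology


/-- Exponential decay of the Fourier coefficients of the `P`-periodized
Gaussian pulse: `|h^(n)| ≤ (X/P)·e^{a²/(2c²)}·e^{-2πna/P}` for all `n ≥ 1` and `a > 0`. -/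
theorem fourier_coeff_decay (X c P m : ℝ) (hX : 0 < X) (hc : 0 < c) (hP : 0 < P)
    (hext : ℝ → ℝ)
    (hhext : ∀ t : ℝ, hext t = ∑' l : ℤ,
      (X / (Real.sqrt (2 * Real.pi) * c)) * Real.exp (-(t + (l : ℝ) * P - m) ^ 2 / (2 * c ^ 2)))
    (coef : ℤ → ℂ)
    (hcoef : ∀ n : ℤ, coef n = (1 / (P : ℂ)) *
      ∫ t in (0:ℝ)..P, (hext t : ℂ) *
        Complex.exp (-2 * Real.pi * Complex.I * (n : ℂ) * (t : ℂ) / (P : ℂ))) :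
    ∀ n : ℤ, 1 ≤ n → ∀ a : ℝ, 0 < a →
      ‖coef n‖ ≤ (X / P) * Real.exp (a ^ 2 / (2 * c ^ 2)) *
        Real.exp (-2 * Real.pi * (n : ℝ) * a / P) := by
  intro n hn a ha
  have hPc : (P : ℂ) ≠ 0 := Complex.ofReal_ne_zero.mpr hP.ne'
  have hcc : (c : ℂ) ≠ 0 := Complex.ofReal_ne_zero.mpr hc.ne'
  set K : ℝ := X / (Real.sqrt (2 * Real.pi) * c) with hKdef
  set b : ℂ := ((P^2/(2*c^2) : ℝ) : ℂ) with hb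
  set C : ℂ := ((m*P/c^2 : ℝ) : ℂ) - ((2*Real.pi*(n:ℝ) : ℝ) : ℂ) * Complex.I with hCdef
  set D : ℂ := ((-(m^2/(2*c^2)) : ℝ) : ℂ) with hD
  set K' : ℂ := (K : ℂ) * Complex.exp D with hK'
  set f : ℝ → ℂ := fun u => K' * Complex.exp (-b*(u:ℂ)^2 + C*(u:ℂ)) with hf
  have hbre : 0 < b.re := by rw [hb, Complex.ofReal_re]; positivity
  have hfcont : Continuous f := by
    apply continuous_const.mul
    exact Complex.continuous_exp.comp (by continuity)
  set F : C(ℝ, ℂ) := ⟨f, hfcont⟩ with hF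
  -- pointwise identity
  have hpt : ∀ u : ℝ, (hext (P*u) : ℂ) *
      Complex.exp (-2 * Real.pi * Complex.I * (n : ℂ) * ((P*u : ℝ) : ℂ) / (P : ℂ))
      = ∑' l : ℤ, f (u + l) := by
    intro u
    rw [hhext, Complex.ofReal_tsum, ← tsum_mul_right]
    refine tsum_congr fun l => ?_
    rw [Complex.ofReal_mul, Complex.ofReal_exp, hf]
    rw [hK']
    simp only [mul_assoc, ← Complex.exp_add]
    congr 1
    rw [Complex.exp_eq_exp_iff_exists_int]
    refine ⟨n*l, ?_⟩
    rw [hb, hCdef, hD]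
    push_cast
    generalize hd2 : (c:ℂ)^2 = d
    have hd : d ≠ 0 := hd2 ▸ pow_ne_zero _ hcc
    field_simp
    ring
  -- integrability
  have hint : Integrable f := by
    refine ((integrable_cexp_quadratic hbre C 0).const_mul K').congr
      (Filter.EventuallyEq.of_eq (funext fun u => by simp [hf]))
  -- big O
  have hbigO : (F : ℝ → ℂ) =O[Filter.cocompact ℝ] (|·| ^ (-2 : ℝ)) := by
    have h := (cexp_neg_quadratic_isLittleO_abs_rpow_cocompact
      (a := -b) (by simpa using hbre) C (-2)).isBigO.const_mul_left K'
    exact h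
  have hsum : ∀ Kc : TopologicalSpace.Compacts ℝ,
      Summable fun l : ℤ => ‖(F.comp (ContinuousMap.addRight (l:ℝ))).restrict Kc‖ :=
    fun Kc => summable_of_isBigO (Real.summable_abs_int_rpow one_lt_two)
      ((isBigO_norm_restrict_cocompact F (by norm_num) hbigO Kc).comp_tendsto
        Int.tendsto_coe_cofinite)
  -- main computation
  have hcoefval : coef n = ∫ u : ℝ, f u := by
    rw [hcoef]
    have hsub : (∫ t in (0:ℝ)..P, (hext t : ℂ) *
        Complex.exp (-2 * Real.pi * Complex.I * (n : ℂ) * (t : ℂ) / (P : ℂ)))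
        = P • ∫ u in (0:ℝ)..(1:ℝ), (hext (P*u) : ℂ) *
          Complex.exp (-2 * Real.pi * Complex.I * (n : ℂ) * ((P*u : ℝ) : ℂ) / (P : ℂ)) := by
      rw [smul_integral_comp_mul_left
        (fun t : ℝ => (hext t : ℂ) *
          Complex.exp (-2 * Real.pi * Complex.I * (n : ℂ) * (t : ℂ) / (P : ℂ))) P]
      norm_num
    rw [hsub, Complex.real_smul]
    rw [show (1 / (P:ℂ)) * ((P:ℂ) * ∫ u in (0:ℝ)..(1:ℝ), (hext (P*u) : ℂ) *
        Complex.exp (-2 * Real.pi * Complex.I * (n : ℂ) * ((P*u : ℝ) : ℂ) / (P : ℂ)))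
        = ∫ u in (0:ℝ)..(1:ℝ), (hext (P*u) : ℂ) *
        Complex.exp (-2 * Real.pi * Complex.I * (n : ℂ) * ((P*u : ℝ) : ℂ) / (P : ℂ)) by
      field_simp]
    calc (∫ u in (0:ℝ)..(1:ℝ), (hext (P*u) : ℂ) *
          Complex.exp (-2 * Real.pi * Complex.I * (n : ℂ) * ((P*u : ℝ) : ℂ) / (P : ℂ)))
        = ∫ u in (0:ℝ)..(1:ℝ), ∑' l : ℤ, (F.comp (ContinuousMap.addRight (l:ℝ))) u := by
          refine intervalIntegral.integral_congr fun u _ => ?_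
          rw [hpt u]
          exact tsum_congr fun l => by simp [hF]
      _ = ∑' l : ℤ, ∫ u in (0:ℝ)..(1:ℝ), (F.comp (ContinuousMap.addRight (l:ℝ))) u :=
          (intervalIntegral.tsum_intervalIntegral_eq_of_summable_norm
            (hsum ⟨Set.uIcc 0 1, isCompact_uIcc⟩)).symm
      _ = ∑' l : ℤ, ∫ u in (0:ℝ)..(1:ℝ), f (u + (l:ℝ)) := by
          refine tsum_congr fun l => intervalIntegral.integral_congr fun u _ => by simp [hF]
      _ = ∫ u : ℝ, f u := hint.hasSum_intervalIntegral_comp_add_int.tsum_eq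
  have hval : ∫ u : ℝ, f u = K' * (((Real.pi : ℂ) / b) ^ (1/2 : ℂ) *
      Complex.exp (0 - C^2/(4*(-b)))) := by
    rw [MeasureTheory.integral_const_mul]
    congr 1
    have := integral_cexp_quadratic (b := -b) (by simpa using hbre) C 0
    simp only [add_zero, neg_neg] at this
    rw [← this]
  have hKpos : 0 < K := div_pos hX (mul_pos (Real.sqrt_pos.mpr (by positivity)) hc)
  have hnormK : ‖K'‖ = K * Real.exp (-(m^2/(2*c^2))) := by
    rw [hK', norm_mul, Complex.norm_exp, hD,
      Complex.norm_real, Real.norm_eq_abs, abs_of_pos hKpos, Complex.ofReal_re]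
  have hpow : ((Real.pi : ℂ) / b) ^ (1/2 : ℂ) = ((Real.sqrt (2*Real.pi) * c / P : ℝ) : ℂ) := by
    have h1 : ((Real.pi : ℂ) / b) = ((2*Real.pi*c^2/P^2 : ℝ) : ℂ) := by
      rw [hb]; push_cast; field_simp
    rw [h1, show ((1/2 : ℂ)) = (((1/2 : ℝ) : ℝ) : ℂ) by norm_num,
      ← Complex.ofReal_cpow (by positivity), ← Real.sqrt_eq_rpow,
      show 2*Real.pi*c^2/P^2 = (Real.sqrt (2*Real.pi)*c/P)^2 by
        rw [div_pow, mul_pow, Real.sq_sqrt (by positivity)],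
      Real.sqrt_sq (by positivity)]
  have hexpo : (0 : ℂ) - C^2/(4*(-b)) =
      ((m^2/(2*c^2) - 2*Real.pi^2*(n:ℝ)^2*c^2/P^2 : ℝ) : ℂ) +
      ((-(2*Real.pi*(n:ℝ)*m/P) : ℝ) : ℂ) * Complex.I := by
    rw [hCdef, hb]
    push_cast
    generalize hd2 : (c:ℂ)^2 = d
    have hd : d ≠ 0 := hd2 ▸ pow_ne_zero _ hcc
    field_simp
    ring_nf
    simp only [Complex.I_sq]
    ring
  have hnormexp : ‖Complex.exp ((0 : ℂ) - C^2/(4*(-b)))‖ =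
      Real.exp (m^2/(2*c^2) - 2*Real.pi^2*(n:ℝ)^2*c^2/P^2) := by
    rw [hexpo, Complex.norm_exp, Complex.add_re, Complex.ofReal_re,
      Complex.mul_I_re, Complex.ofReal_im]
    norm_num
  have hnorm : ‖coef n‖ = (X/P) * Real.exp (-(2*Real.pi^2*(n:ℝ)^2*c^2/P^2)) := by
    rw [hcoefval, hval, norm_mul, hnormK, norm_mul, hpow, hnormexp,
      Complex.norm_real, Real.norm_eq_abs, abs_of_pos (show (0:ℝ) < Real.sqrt (2*Real.pi) * c / P by positivity)]
    rw [show K * Real.exp (-(m^2/(2*c^2))) * (Real.sqrt (2*Real.pi)*c/P *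
        Real.exp (m^2/(2*c^2) - 2*Real.pi^2*(n:ℝ)^2*c^2/P^2))
        = (K * (Real.sqrt (2*Real.pi)*c/P)) * (Real.exp (-(m^2/(2*c^2))) *
        Real.exp (m^2/(2*c^2) - 2*Real.pi^2*(n:ℝ)^2*c^2/P^2)) by ring,
      ← Real.exp_add]
    have hs : Real.sqrt (2*Real.pi) ≠ 0 := by positivity
    congr 1
    · rw [hKdef]; field_simp
    · ring
  rw [hnorm]
  have key : -(2*Real.pi^2*(n:ℝ)^2*c^2/P^2) ≤ a^2/(2*c^2) + -2*Real.pi*(n:ℝ)*a/P := by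
    have h2 : a^2/(2*c^2) + -2*Real.pi*(n:ℝ)*a/P + 2*Real.pi^2*(n:ℝ)^2*c^2/P^2
        = (a*P - 2*Real.pi*(n:ℝ)*c^2)^2/(2*c^2*P^2) := by
      field_simp
      ring
    have h3 : 0 ≤ a^2/(2*c^2) + -2*Real.pi*(n:ℝ)*a/P + 2*Real.pi^2*(n:ℝ)^2*c^2/P^2 := by
      rw [h2]; positivity
    linarith
  calc (X/P) * Real.exp (-(2*Real.pi^2*(n:ℝ)^2*c^2/P^2))
      ≤ (X/P) * Real.exp (a^2/(2*c^2) + -2*Real.pi*(n:ℝ)*a/P) := by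
        apply mul_le_mul_of_nonneg_left (Real.exp_le_exp.mpr key) (by positivity)
    _ = (X/P) * Real.exp (a^2/(2*c^2)) * Real.exp (-2*Real.pi*(n:ℝ)*a/P) := by
        rw [Real.exp_add]; ring
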